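/- Let R_k^m(t) = P_k^m(t)/P_k^m(1) be the normalized Gegenbauer polynomial, with m ≥ 2. Then |R_k^m(t)| = 1 for t in [-1,1] if and only if t = 1 or t = -1, provided k ≥ 1. -/
import Mathlib


open scoped RealInnerProductSpace BigOperators

/-- Gegenbauer polynomial `P_k^m` of degree `k` with parameter `(m-1)/2`,
defined by the standard three-term recurrence. -/
noncomputable def Geg (m : ℕ) : ℕ → ℝ → ℝ
  | 0 => fun _ => 1
  | 1 => fun t => ((m : ℝ) - 1) * t
  | n + 2 => fun t =>
      ((2 * (n : ℝ) + m + 1) * t * Geg m (n + 1) t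
        - ((n : ℝ) + m - 1) * Geg m n t) / ((n : ℝ) + 2)

noncomputable def bcoef (m : ℕ) : ℕ → ℝ
  | 0 => 1
  | j + 1 => bcoef m j * (((m : ℝ) - 1) / 2 + j) / (j + 1)

lemma bcoef_zero (m : ℕ) : bcoef m 0 = 1 := rfl

lemma bcoef_succ (m j : ℕ) :
    bcoef m (j + 1) = bcoef m j * (((m : ℝ) - 1) / 2 + j) / (j + 1) := rfl

lemma bcoef_pos (m : ℕ) (hm : 2 ≤ m) : ∀ j, 0 < bcoef m j := by
  intro j
  induction j with
  | zero => norm_num [bcoef]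
  | succ j ih =>
    have hm' : (2 : ℝ) ≤ (m : ℝ) := by exact_mod_cast hm
    rw [bcoef_succ]
    have hj0 : (0:ℝ) ≤ (j:ℝ) := Nat.cast_nonneg j
    have h1 : (0:ℝ) < ((m : ℝ) - 1) / 2 + j := by linarith
    exact div_pos (mul_pos ih h1) (by positivity)

lemma keyid (m j i : ℕ) :
    ((j : ℝ) + i + 2) * (bcoef m (j + 1) * bcoef m (i + 1))
      = ((2 * ((j : ℝ) + i) + m + 1) / 2)
          * (bcoef m (j + 1) * bcoef m i + bcoef m j * bcoef m (i + 1))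
        - (((j : ℝ) + i) + m - 1) * (bcoef m j * bcoef m i) := by
  rw [bcoef_succ, bcoef_succ]
  have hj : ((j : ℝ) + 1) ≠ 0 := by positivity
  have hi : ((i : ℝ) + 1) ≠ 0 := by positivity
  field_simp
  ring

lemma endid (m n : ℕ) :
    ((n : ℝ) + 2) * bcoef m (n + 2) = ((2 * (n : ℝ) + m + 1) / 2) * bcoef m (n + 1) := by
  rw [bcoef_succ m (n + 1)]
  have h : ((n : ℝ) + 1 + 1) ≠ 0 := by positivity
  push_cast
  field_simp
  ring

lemma sum_step (m n : ℕ) (θ : ℝ) :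
    (2 * (n : ℝ) + m + 1) * Real.cos θ *
        (∑ k ∈ Finset.range (n + 2),
          bcoef m k * bcoef m (n + 1 - k) * Real.cos (((n : ℝ) + 1 - 2 * k) * θ))
      - ((n : ℝ) + m - 1) *
        (∑ k ∈ Finset.range (n + 1),
          bcoef m k * bcoef m (n - k) * Real.cos (((n : ℝ) - 2 * k) * θ))
    = (∑ k ∈ Finset.range (n + 3),
          bcoef m k * bcoef m (n + 2 - k) * Real.cos (((n : ℝ) + 2 - 2 * k) * θ))
        * ((n : ℝ) + 2) := by
  have hcos : ∀ k : ℕ,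
      Real.cos (((n : ℝ) + 2 - 2 * k) * θ) + Real.cos (((n : ℝ) - 2 * k) * θ)
        = 2 * (Real.cos (((n : ℝ) + 1 - 2 * k) * θ) * Real.cos θ) := by
    intro k
    have h := Real.cos_add_cos (((n : ℝ) + 2 - 2 * k) * θ) (((n : ℝ) - 2 * k) * θ)
    rw [show ((((n : ℝ) + 2 - 2 * k) * θ + ((n : ℝ) - 2 * k) * θ) / 2)
          = ((n : ℝ) + 1 - 2 * k) * θ by ring,
        show ((((n : ℝ) + 2 - 2 * k) * θ - ((n : ℝ) - 2 * k) * θ) / 2) = θ by ring,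
        mul_assoc] at h
    exact h
  have step1 : Real.cos θ *
      (∑ k ∈ Finset.range (n + 2),
        bcoef m k * bcoef m (n + 1 - k) * Real.cos (((n : ℝ) + 1 - 2 * k) * θ))
    = ((∑ k ∈ Finset.range (n + 2),
          (if k = n + 2 then 0 else
            bcoef m k * bcoef m (n + 1 - k) * Real.cos (((n : ℝ) + 2 - 2 * k) * θ)))
       + (∑ k ∈ Finset.range (n + 2),
          bcoef m k * bcoef m (n + 1 - k) * Real.cos (((n : ℝ) - 2 * k) * θ))) / 2 := by
    rw [Finset.mul_sum, ← Finset.sum_add_distrib, Finset.sum_div]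
    refine Finset.sum_congr rfl fun k hk => ?_
    rw [if_neg (by have := Finset.mem_range.mp hk; omega)]
    linear_combination (-(bcoef m k * bcoef m (n + 1 - k) / 2)) * hcos k
  have r1 : (∑ k ∈ Finset.range (n + 3),
        (if k = 0 then 0 else
          bcoef m (k - 1) * bcoef m (n + 2 - k) * Real.cos (((n : ℝ) + 2 - 2 * k) * θ)))
      = ∑ k ∈ Finset.range (n + 2),
          bcoef m k * bcoef m (n + 1 - k) * Real.cos (((n : ℝ) - 2 * k) * θ) := by
    rw [Finset.sum_range_succ', if_pos rfl, add_zero]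
    refine Finset.sum_congr rfl fun k _ => ?_
    rw [if_neg (Nat.succ_ne_zero k), Nat.succ_sub_one,
        show n + 2 - (k + 1) = n + 1 - k by omega]
    congr 1
    push_cast
    ring
  have r2 : (∑ k ∈ Finset.range (n + 3),
        (if k = 0 ∨ k = n + 2 then 0 else
          bcoef m (k - 1) * bcoef m (n + 1 - k) * Real.cos (((n : ℝ) + 2 - 2 * k) * θ)))
      = ∑ k ∈ Finset.range (n + 1),
          bcoef m k * bcoef m (n - k) * Real.cos (((n : ℝ) - 2 * k) * θ) := by
    rw [Finset.sum_range_succ, if_pos (Or.inr rfl), add_zero,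
        Finset.sum_range_succ', if_pos (Or.inl rfl), add_zero]
    refine Finset.sum_congr rfl fun k hk => ?_
    have hk' := Finset.mem_range.mp hk
    rw [if_neg (by omega), Nat.succ_sub_one, show n + 1 - (k + 1) = n - k by omega]
    congr 1
    push_cast
    ring
  have r3 : (∑ k ∈ Finset.range (n + 3),
        (if k = n + 2 then 0 else
          bcoef m k * bcoef m (n + 1 - k) * Real.cos (((n : ℝ) + 2 - 2 * k) * θ)))
      = ∑ k ∈ Finset.range (n + 2),
          (if k = n + 2 then 0 else
            bcoef m k * bcoef m (n + 1 - k) * Real.cos (((n : ℝ) + 2 - 2 * k) * θ)) := by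
    rw [Finset.sum_range_succ, if_pos rfl, add_zero]
  rw [mul_assoc, step1, ← r1, ← r2, ← r3, Finset.sum_mul,
      ← Finset.sum_add_distrib, Finset.sum_div, Finset.mul_sum, Finset.mul_sum,
      ← Finset.sum_sub_distrib]
  refine Finset.sum_congr rfl fun k hk => ?_
  have hk3 := Finset.mem_range.mp hk
  generalize Real.cos (((n : ℝ) + 2 - 2 * k) * θ) = C
  rcases Nat.eq_zero_or_pos k with h0 | h0
  · subst h0
    rw [if_neg (by omega), if_pos rfl, if_pos (Or.inl rfl)]
    simp only [Nat.sub_zero, bcoef_zero, one_mul]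
    linear_combination (-C) * endid m n
  rcases eq_or_ne k (n + 2) with h2 | h2
  · subst h2
    rw [if_pos rfl, if_neg (by omega), if_pos (Or.inr rfl),
        Nat.sub_self, show n + 2 - 1 = n + 1 from rfl, bcoef_zero, mul_one]
    linear_combination (-C) * endid m n
  · obtain ⟨j, rfl⟩ : ∃ j, k = j + 1 := ⟨k - 1, by omega⟩
    have hj : j ≤ n := by omega
    rw [if_neg h2, if_neg (Nat.succ_ne_zero j), if_neg (by push_neg; exact ⟨Nat.succ_ne_zero j, h2⟩),
        Nat.succ_sub_one, show n + 1 - (j + 1) = n - j by omega,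
        show n + 2 - (j + 1) = (n - j) + 1 by omega]
    have hni : (n : ℝ) = (j : ℝ) + ((n - j : ℕ) : ℝ) := by
      have : j + (n - j) = n := by omega
      exact_mod_cast this.symm
    rw [hni]
    linear_combination (-C) * keyid m j (n - j)

lemma geg_cos (m : ℕ) : ∀ (n : ℕ) (θ : ℝ),
    Geg m n (Real.cos θ) = ∑ k ∈ Finset.range (n + 1),
      bcoef m k * bcoef m (n - k) * Real.cos (((n : ℝ) - 2 * k) * θ) := by
  intro n
  induction n using Nat.twoStepInduction with
  | zero => intro θ; simp [Geg, bcoef]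
  | one =>
    intro θ
    rw [Finset.sum_range_succ, Finset.sum_range_succ, Finset.sum_range_zero]
    have e0 : ((1 : ℝ) - 2 * ((0:ℕ):ℝ)) * θ = θ := by push_cast; ring
    have e1 : ((1 : ℝ) - 2 * ((1:ℕ):ℝ)) * θ = -θ := by push_cast; ring
    simp only [Nat.cast_one, Nat.cast_zero]
    rw [show ((1:ℝ) - 2 * 0) * θ = θ by ring, show ((1:ℝ) - 2 * 1) * θ = -θ by ring,
        Real.cos_neg]
    show ((m : ℝ) - 1) * Real.cos θ = _
    simp only [bcoef_zero, bcoef_succ, Nat.sub_self, Nat.sub_zero, Nat.cast_zero]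
    ring
  | more n ih ih2 =>
    intro θ
    simp only [Geg]
    rw [ih θ, ih2 θ, div_eq_iff (by positivity : ((n:ℝ) + 2) ≠ 0)]
    have hs := sum_step m n θ
    push_cast
    rw [show n + 1 + 1 = n + 2 from rfl, show n + 2 + 1 = n + 3 from rfl]
    convert hs using 1

theorem normalized_gegenbauer_abs_eq_one_iff (m k : ℕ) (hm : 2 ≤ m) (hk : 1 ≤ k)
    (t : ℝ) (ht : t ∈ Set.Icc (-1 : ℝ) 1) :
    |Geg m k t / Geg m k 1| = 1 ↔ t = 1 ∨ t = -1 := by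
  obtain ⟨ht1, ht2⟩ := ht
  have hS : Geg m k 1 = ∑ j ∈ Finset.range (k + 1), bcoef m j * bcoef m (k - j) := by
    have h := geg_cos m k 0
    rw [Real.cos_zero] at h
    rw [h]
    refine Finset.sum_congr rfl fun j _ => ?_
    rw [mul_zero, Real.cos_zero, mul_one]
  have hSpos : 0 < ∑ j ∈ Finset.range (k + 1), bcoef m j * bcoef m (k - j) :=
    Finset.sum_pos (fun j _ => mul_pos (bcoef_pos m hm j) (bcoef_pos m hm _))
      (by simp)
  set S := ∑ j ∈ Finset.range (k + 1), bcoef m j * bcoef m (k - j) with hSdef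
  constructor
  · intro habs
    set θ := Real.arccos t with hθ
    have hct : Real.cos θ = t := Real.cos_arccos ht1 ht2
    have hexp : Geg m k t = ∑ j ∈ Finset.range (k + 1),
        bcoef m j * bcoef m (k - j) * Real.cos (((k : ℝ) - 2 * j) * θ) := by
      rw [← hct]; exact geg_cos m k θ
    have hGa : |Geg m k t| = S := by
      rw [abs_div, hS, abs_of_pos hSpos] at habs
      have := (div_eq_one_iff_eq (ne_of_gt hSpos)).mp habs
      exact this
    have main : ∀ s : ℝ, s * s = 1 → Geg m k t = s * S → t = 1 ∨ t = -1 := by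
      intro s hs2 hG
      have habs1 : |s| = 1 := by
        rcases mul_self_eq_one_iff.mp hs2 with h | h <;> simp [h]
      have hzero : ∑ j ∈ Finset.range (k + 1),
          (bcoef m j * bcoef m (k - j)) * (1 - s * Real.cos (((k : ℝ) - 2 * j) * θ)) = 0 := by
        calc ∑ j ∈ Finset.range (k + 1),
            (bcoef m j * bcoef m (k - j)) * (1 - s * Real.cos (((k : ℝ) - 2 * j) * θ))
            = S - s * Geg m k t := by
              rw [hSdef, hexp, Finset.mul_sum, ← Finset.sum_sub_distrib]
              exact Finset.sum_congr rfl fun j _ => by ring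
          _ = 0 := by rw [hG, ← mul_assoc, hs2, one_mul, sub_self]
      have hnn : ∀ j ∈ Finset.range (k + 1),
          (0:ℝ) ≤ bcoef m j * bcoef m (k - j) * (1 - s * Real.cos (((k : ℝ) - 2 * j) * θ)) := by
        intro j _
        have hb := mul_pos (bcoef_pos m hm j) (bcoef_pos m hm (k - j))
        have hc : |s * Real.cos (((k : ℝ) - 2 * j) * θ)| ≤ 1 := by
          rw [abs_mul, habs1, one_mul]; exact Real.abs_cos_le_one _
        have := (abs_le.mp hc).2
        have : (0:ℝ) ≤ 1 - s * Real.cos (((k : ℝ) - 2 * j) * θ) := by linarith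
        exact mul_nonneg (le_of_lt hb) this
      have hall := (Finset.sum_eq_zero_iff_of_nonneg hnn).mp hzero
      have hu : ∀ j ∈ Finset.range (k + 1),
          Real.cos (((k : ℝ) - 2 * j) * θ) = s := by
        intro j hj
        have h := hall j hj
        have hb := mul_pos (bcoef_pos m hm j) (bcoef_pos m hm (k - j))
        have h2 : 1 - s * Real.cos (((k : ℝ) - 2 * j) * θ) = 0 := by
          rcases mul_eq_zero.mp h with h' | h'
          · exact absurd h' (ne_of_gt hb)
          · exact h'
        linear_combination (-s) * h2 - Real.cos (((k : ℝ) - 2 * j) * θ) * hs2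
      have h0 : Real.cos ((k : ℝ) * θ) = s := by
        have h := hu 0 (Finset.mem_range.mpr (by omega))
        rw [show ((k : ℝ) - 2 * ((0:ℕ):ℝ)) * θ = (k : ℝ) * θ by push_cast; ring] at h
        exact h
      have h1 : Real.cos (((k : ℝ) - 2) * θ) = s := by
        have h := hu 1 (Finset.mem_range.mpr (by omega))
        rw [show ((k : ℝ) - 2 * ((1:ℕ):ℝ)) * θ = ((k : ℝ) - 2) * θ by push_cast; ring] at h
        exact h
      have trig := Real.cos_add_cos ((k : ℝ) * θ) (((k : ℝ) - 2) * θ)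
      rw [show (((k : ℝ) * θ + ((k : ℝ) - 2) * θ) / 2) = ((k : ℝ) - 1) * θ by ring,
          show (((k : ℝ) * θ - ((k : ℝ) - 2) * θ) / 2) = θ by ring, h0, h1, hct] at trig
      have habs2 : 1 ≤ |t| := by
        have h3 : |s| = |Real.cos (((k : ℝ) - 1) * θ)| * |t| := by
          rw [← abs_mul]; congr 1; linarith
        have h4 := Real.abs_cos_le_one (((k : ℝ) - 1) * θ)
        have h5 : (0:ℝ) ≤ |t| := abs_nonneg t
        nlinarith [habs1]
      have habs3 : |t| = 1 := le_antisymm (abs_le.mpr ⟨ht1, ht2⟩) habs2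
      exact (abs_eq (by norm_num : (0:ℝ) ≤ 1)).mp habs3
    rcases (abs_eq (le_of_lt hSpos)).mp hGa with hG | hG
    · exact main 1 (by norm_num) (by rw [one_mul]; exact hG)
    · exact main (-1) (by norm_num) (by rw [neg_one_mul]; exact hG)
  · rintro (rfl | rfl)
    · rw [hS, div_self (ne_of_gt hSpos), abs_one]
    · have hexp := geg_cos m k Real.pi
      rw [Real.cos_pi] at hexp
      have hcj : ∀ j : ℕ, Real.cos (((k : ℝ) - 2 * j) * Real.pi)
          = Real.cos ((k : ℝ) * Real.pi) := by
        intro j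
        have h := Real.cos_sub_int_mul_two_pi ((k : ℝ) * Real.pi) (j : ℤ)
        rw [show (k : ℝ) * Real.pi - (j : ℤ) * (2 * Real.pi)
              = ((k : ℝ) - 2 * j) * Real.pi by push_cast; ring] at h
        exact h
      have hGneg : Geg m k (-1) = Real.cos ((k : ℝ) * Real.pi) * S := by
        rw [hexp, hSdef, Finset.mul_sum]
        refine Finset.sum_congr rfl fun j _ => ?_
        rw [hcj j]; ring
      rw [hS, hGneg, mul_div_assoc, div_self (ne_of_gt hSpos), mul_one]
      have := Real.abs_cos_int_mul_pi (k : ℤ)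
      push_cast at this
      exact this
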